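/- Let L be a nonnegative self-adjoint linear operator on a real inner product space H, M > 0, ε > 0, and suppose φ : [0,T] → H, μ : [0,T] → H, r : [0,T] → ℝ satisfy φ′ = −M L μ, μ = ε² L φ + (r/√(E₁(φ)+C₀)) F′(φ), and r′ = (1/(2√(E₁(φ)+C₀))) (F′(φ), φ′). Then (d/dt)[ (ε²/2)(Lφ, φ) + r² ] = −M (Lμ, μ) ≤ 0, i.e. the modified energy is non-increasing. -/

import Mathlib

open scoped RealInnerProductSpace

/-- continuous-in-time modified energy dissipation law for the SAV system:
if `φ' = -M L μ`, `μ = ε² L φ + (r/√(E₁(φ)+C₀)) F'(φ)` and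
`r' = (1/(2√(E₁(φ)+C₀))) (F'(φ), φ')`, then
`(d/dt)[(ε²/2)(Lφ,φ) + r²] = -M (Lμ, μ) ≤ 0`.
Here `e t` stands for `E₁(φ t) + C₀ > 0` and `f t` for `F'(φ t)`. -/
theorem sav_modified_energy_dissipation
    {H : Type*} [NormedAddCommGroup H] [InnerProductSpace ℝ H]
    (L : H →L[ℝ] H)
    (hLsa : ∀ u v : H, ⟪L u, v⟫ = ⟪u, L v⟫)
    (hLpos : ∀ u : H, 0 ≤ ⟪L u, u⟫)
    (M ε : ℝ) (hM : 0 < M) (hε : 0 < ε)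
    (φ μ f : ℝ → H) (r e : ℝ → ℝ)
    (he : ∀ t, 0 < e t)
    (hφ : ∀ t, HasDerivAt φ (-(M • L (μ t))) t)
    (hμ : ∀ t, μ t = (ε ^ 2) • L (φ t) + (r t / Real.sqrt (e t)) • f t)
    (hr : ∀ t, HasDerivAt r ((1 / (2 * Real.sqrt (e t))) * ⟪f t, -(M • L (μ t))⟫) t)
    (t : ℝ) :
    HasDerivAt (fun s => ε ^ 2 / 2 * ⟪L (φ s), φ s⟫ + (r s) ^ 2)
        (-(M * ⟪L (μ t), μ t⟫)) t ∧
      -(M * ⟪L (μ t), μ t⟫) ≤ 0 := by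
  constructor
  · have hs : Real.sqrt (e t) ≠ 0 := (Real.sqrt_pos.mpr (he t)).ne'
    set v := -(M • L (μ t)) with hv
    have hL : HasDerivAt (fun s => L (φ s)) (L v) t :=
      L.hasFDerivAt.comp_hasDerivAt t (hφ t)
    have h1 : HasDerivAt (fun s => ⟪L (φ s), φ s⟫) (⟪L (φ t), v⟫ + ⟪L v, φ t⟫) t :=
      hL.inner ℝ (hφ t)
    have h2 : HasDerivAt (fun s => (r s) ^ 2)
        (2 * r t * ((1 / (2 * Real.sqrt (e t))) * ⟪f t, v⟫)) t := by
      refine ((hr t).pow 2).congr_deriv ?_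
      push_cast
      ring
    have hsum := (h1.const_mul (ε ^ 2 / 2)).add h2
    refine hsum.congr_deriv ?_
    have hsym : ⟪L v, φ t⟫ = ⟪L (φ t), v⟫ := by
      rw [hLsa, real_inner_comm]
    have hμv : ⟪μ t, v⟫ = (ε ^ 2) * ⟪L (φ t), v⟫ + (r t / Real.sqrt (e t)) * ⟪f t, v⟫ := by
      rw [hμ t, inner_add_left, real_inner_smul_left, real_inner_smul_left]
    have hleft : -(M * ⟪L (μ t), μ t⟫) = ⟪μ t, v⟫ := by
      rw [hv, inner_neg_right, real_inner_smul_right, real_inner_comm]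
    rw [hleft, hμv, hsym]
    field_simp
    ring
  · have := mul_nonneg hM.le (hLpos (μ t))
    linarith
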